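/- Let Q be a finite subgroup of Houghton's group H_n. Then the set S_Q = {s ∈ S : q(s) ≠ s for some q ∈ Q} of points of S not fixed by Q is finite. In particular, every element of finite order in H_n moves only finitely many points of S. -/

import Mathlib

/-- `f : ℕ × Fin n → ℕ × Fin n` is eventually a translation with translation
vector `m : Fin n → ℤ`: on each ray `ℕ × {x}`, for all sufficiently large `i`,
`f` sends `(i, x)` to `(i + m x, x)`. -/
def EvTrans (n : ℕ) (f : ℕ × Fin n → ℕ × Fin n) (m : Fin n → ℤ) : Prop :=
  ∀ x : Fin n, ∃ z : ℕ, ∀ i : ℕ, z ≤ i →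
    (f (i, x)).2 = x ∧ ((f (i, x)).1 : ℤ) = (i : ℤ) + m x

/-- Houghton's group `H_n`: the subgroup of the symmetric group on
`S = ℕ × Fin n` consisting of the permutations that are eventually
translations on each ray. -/
def Houghton (n : ℕ) : Subgroup (Equiv.Perm (ℕ × Fin n)) where
  carrier := {f : Equiv.Perm (ℕ × Fin n) | ∃ m : Fin n → ℤ, EvTrans n (⇑f) m}
  one_mem' := ⟨0, fun x => ⟨0, fun i _ => by simp⟩⟩
  mul_mem' := by
    rintro a b ⟨ma, hA⟩ ⟨mb, hB⟩
    refine ⟨ma + mb, fun x => ?_⟩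
    obtain ⟨za, hza⟩ := hA x
    obtain ⟨zb, hzb⟩ := hB x
    refine ⟨max zb ((za : ℤ) - mb x).toNat, fun i hi => ?_⟩
    have hib : zb ≤ i := le_trans (le_max_left _ _) hi
    obtain ⟨h2, h1⟩ := hzb i hib
    have hbx : (⇑b) (i, x) = ((b (i, x)).1, x) := Prod.ext_iff.mpr ⟨rfl, h2⟩
    have hk : za ≤ (b (i, x)).1 := by
      have h3 : ((za : ℤ) - mb x) ≤ (i : ℤ) := by
        calc ((za : ℤ) - mb x) ≤ (((za : ℤ) - mb x).toNat : ℤ) := Int.self_le_toNat _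
          _ ≤ (i : ℤ) := by exact_mod_cast le_trans (le_max_right _ _) hi
      have h4 : (za : ℤ) ≤ ((b (i, x)).1 : ℤ) := by rw [h1]; linarith
      exact_mod_cast h4
    obtain ⟨h4, h5⟩ := hza (b (i, x)).1 hk
    constructor
    · show ((a * b) (i, x)).2 = x
      rw [Equiv.Perm.mul_apply, hbx]
      exact h4
    · show (((a * b) (i, x)).1 : ℤ) = (i : ℤ) + (ma + mb) x
      rw [Equiv.Perm.mul_apply, hbx, h5, h1, Pi.add_apply]
      ring
  inv_mem' := by
    rintro a ⟨m, hm⟩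
    refine ⟨-m, fun x => ?_⟩
    obtain ⟨z, hz⟩ := hm x
    refine ⟨((z : ℤ) + m x).toNat, fun i hi => ?_⟩
    have h1 : (z : ℤ) + m x ≤ (i : ℤ) :=
      le_trans (Int.self_le_toNat _) (by exact_mod_cast hi)
    have h0 : (0 : ℤ) ≤ (i : ℤ) - m x := by
      have hz0 : (0 : ℤ) ≤ (z : ℤ) := Int.natCast_nonneg z
      linarith
    set j := ((i : ℤ) - m x).toNat with hjdef
    have hj' : (j : ℤ) = (i : ℤ) - m x := Int.toNat_of_nonneg h0
    have hjz : z ≤ j := by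
      have : (z : ℤ) ≤ (j : ℤ) := by rw [hj']; linarith
      exact_mod_cast this
    obtain ⟨h2, h3⟩ := hz j hjz
    have hfst : (a (j, x)).1 = i := by
      have : ((a (j, x)).1 : ℤ) = (i : ℤ) := by rw [h3, hj']; ring
      exact_mod_cast this
    have hfix : (⇑a) (j, x) = (i, x) := Prod.ext_iff.mpr ⟨hfst, h2⟩
    have hinv : (⇑a⁻¹) (i, x) = (j, x) := by
      rw [← hfix]
      exact Equiv.symm_apply_apply a (j, x)
    constructor
    · rw [hinv]
    · rw [hinv]
      show (j : ℤ) = (i : ℤ) + (-m) x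
      rw [hj', Pi.neg_apply]
      ring

lemma houghton_finOrder_support_finite (n : ℕ) (g : Equiv.Perm (ℕ × Fin n))
    (hg : g ∈ Houghton n) (hfo : IsOfFinOrder g) :
    {s : ℕ × Fin n | g s ≠ s}.Finite := by
  obtain ⟨m, hm⟩ := hg
  set k := orderOf g with hkdef
  have hk : 0 < k := hfo.orderOf_pos
  have key : ∀ x : Fin n, ∃ z : ℕ, ∀ i : ℕ, z ≤ i → g (i, x) = (i, x) := by
    intro x
    obtain ⟨z, hz⟩ := hm x
    set i₀ : ℕ := z + k * (m x).natAbs with hi0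
    have hi0' : (i₀ : ℤ) = (z : ℤ) + (k : ℤ) * |m x| := by
      rw [hi0]; push_cast [Int.natCast_natAbs]; ring
    have iter : ∀ j : ℕ, j ≤ k →
        ∃ p : ℕ, (g ^ j) (i₀, x) = (p, x) ∧ (p : ℤ) = (i₀ : ℤ) + j * m x := by
      intro j
      induction j with
      | zero => intro _; exact ⟨i₀, by simp, by simp⟩
      | succ j ih =>
        intro hjk
        obtain ⟨p, hp, hpv⟩ := ih (Nat.le_of_succ_le hjk)
        have habs1 : m x ≤ |m x| := le_abs_self _
        have habs2 : -|m x| ≤ m x := neg_abs_le _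
        have hjk' : (j : ℤ) ≤ (k : ℤ) := by exact_mod_cast Nat.le_of_succ_le hjk
        have hzp : z ≤ p := by
          have : (z : ℤ) ≤ (p : ℤ) := by
            rw [hpv, hi0']
            nlinarith [Int.natCast_nonneg j, abs_nonneg (m x)]
          exact_mod_cast this
        obtain ⟨h2, h1⟩ := hz p hzp
        refine ⟨(g (p, x)).1, ?_, ?_⟩
        · rw [pow_succ', Equiv.Perm.mul_apply, hp]
          exact Prod.ext_iff.mpr ⟨rfl, h2⟩
        · rw [h1, hpv]; push_cast; ring
    obtain ⟨p, hp, hpv⟩ := iter k le_rfl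
    have hgk : (g ^ k) (i₀, x) = (i₀, x) := by
      rw [pow_orderOf_eq_one g]; rfl
    have hpi : p = i₀ := by
      have := hgk.symm.trans hp
      exact (Prod.ext_iff.mp this).1.symm
    have hmx : m x = 0 := by
      have hk' : (0 : ℤ) < (k : ℤ) := by exact_mod_cast hk
      have : (i₀ : ℤ) = (i₀ : ℤ) + k * m x := by rw [← hpv, hpi]
      have h0 : (k : ℤ) * m x = 0 := by linarith
      rcases mul_eq_zero.mp h0 with h | h
      · exact absurd h hk'.ne'
      · exact h
    refine ⟨z, fun i hi => ?_⟩
    obtain ⟨h2, h1⟩ := hz i hi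
    have : (g (i, x)).1 = i := by
      have : ((g (i, x)).1 : ℤ) = (i : ℤ) := by rw [h1, hmx]; ring
      exact_mod_cast this
    exact Prod.ext_iff.mpr ⟨this, h2⟩
  choose z hzf using key
  set Z : ℕ := Finset.univ.sup z with hZ
  have hsub : {s : ℕ × Fin n | g s ≠ s} ⊆ Set.Iio Z ×ˢ Set.univ := by
    rintro ⟨i, x⟩ hs
    by_contra hc
    apply hs
    have : ¬ i < Z := by simpa using hc
    exact hzf x i (le_trans (Finset.le_sup (Finset.mem_univ x)) (not_lt.mp this))
  exact ((Set.finite_Iio Z).prod Set.finite_univ).subset hsub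


/-- If `Q` is a finite subgroup of Houghton's group `H_n`,
then the set of points of `S = ℕ × Fin n` not fixed by `Q` is finite.
In particular, every element of finite order in `H_n` moves only finitely
many points of `S`. -/
theorem houghton_finite_subgroup_support_finite (n : ℕ) (hn : 1 ≤ n)
    (Q : Subgroup (Equiv.Perm (ℕ × Fin n))) (hQ : Q ≤ Houghton n)
    (hfin : Finite Q) :
    {s : ℕ × Fin n | ∃ q ∈ Q, q s ≠ s}.Finite ∧
      ∀ g ∈ Houghton n, IsOfFinOrder g → {s : ℕ × Fin n | g s ≠ s}.Finite := by
  have main : ∀ g ∈ Houghton n, IsOfFinOrder g → {s : ℕ × Fin n | g s ≠ s}.Finite :=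
    fun g hg hfo => houghton_finOrder_support_finite n g hg hfo
  refine ⟨?_, main⟩
  have heq : {s : ℕ × Fin n | ∃ q ∈ Q, q s ≠ s} =
      ⋃ q ∈ (Q : Set (Equiv.Perm (ℕ × Fin n))), {s | q s ≠ s} := by
    ext s; simp
  rw [heq]
  refine Set.Finite.biUnion (Set.toFinite _) fun q hq => ?_
  have hfo : IsOfFinOrder q := by
    obtain ⟨k, hk0, hk1⟩ :=
      isOfFinOrder_iff_pow_eq_one.mp (isOfFinOrder_of_finite (⟨q, hq⟩ : Q))
    refine isOfFinOrder_iff_pow_eq_one.mpr ⟨k, hk0, ?_⟩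
    simpa using Subtype.ext_iff.mp hk1
  exact main q (hQ hq) hfo
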